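/- Let k ≥ 2 and q ≥ 3. Assume the real numbers d^{k-1}/dz^{k-1}(π cot πz)|_{z=a/q}, for 1 ≤ a < q/2 with gcd(a,q)=1, are linearly independent over ℚ (Okada's theorem). Then the ℚ-vector space S_k(q) spanned by {ζ(k,a/q)/π^k : 1 ≤ a < q, gcd(a,q)=1} has dimension at least φ(q)/2. -/

import Mathlib

open Real

/-- The Hurwitz zeta function `ζ(k,x) = ∑_{n≥0} 1/(n+x)^k`. -/
noncomputable def hurwitz (k : ℕ) (x : ℝ) : ℝ :=
  ∑' n : ℕ, 1 / ((n : ℝ) + x) ^ k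

set_option maxHeartbeats 1000000

lemma okada_hasDerivAt_one_div_pow {g : ℝ → ℝ} {g' x : ℝ} (hg : HasDerivAt g g' x)
    (h0 : g x ≠ 0) {j : ℕ} (hj : 1 ≤ j) :
    HasDerivAt (fun y => 1 / (g y) ^ j) (-(j : ℝ) * g' / (g x) ^ (j + 1)) x := by
  obtain ⟨i, rfl⟩ : ∃ i, j = i + 1 := ⟨j - 1, (Nat.succ_pred_eq_of_pos hj).symm⟩
  have h2 := (hg.pow (i + 1)).inv (pow_ne_zero _ h0)
  simp only [one_div]
  refine h2.congr_deriv ?_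
  have h3 : ((g x) ^ (i+1)) ^ 2 = (g x) ^ (i + 2) * (g x) ^ i := by ring
  simp only [Pi.pow_apply, Nat.add_sub_cancel]
  rw [h3]
  field_simp

lemma okada_summable_aux {j : ℕ} (hj : 2 ≤ j) : Summable (fun n : ℕ => 1 / ((n : ℝ) + 1) ^ j) := by
  have := (Real.summable_one_div_nat_pow (p := j)).2 hj
  have h2 := (summable_nat_add_iff (f := fun n : ℕ => 1 / (n : ℝ) ^ j) 1).2 this
  simpa using h2

noncomputable def okadaA (j : ℕ) (x : ℝ) : ℝ := ∑' n : ℕ, 1 / (x + ((n : ℝ) + 1)) ^ j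
noncomputable def okadaB (j : ℕ) (x : ℝ) : ℝ := ∑' n : ℕ, 1 / (((n : ℝ) + 1) - x) ^ j

lemma okada_summable_A {j : ℕ} (hj : 2 ≤ j) {x : ℝ} (hx : 0 < x) :
    Summable (fun n : ℕ => 1 / (x + ((n : ℝ) + 1)) ^ j) := by
  refine Summable.of_nonneg_of_le (fun n => by positivity) (fun n => ?_) (okada_summable_aux hj)
  have h1 : ((n : ℝ) + 1) ≤ x + ((n : ℝ) + 1) := by linarith
  have hb : (0:ℝ) < (n : ℝ) + 1 := by positivity
  exact one_div_le_one_div_of_le (pow_pos hb j) (pow_le_pow_left₀ hb.le h1 j)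

lemma okada_summable_B {j : ℕ} (hj : 2 ≤ j) {x : ℝ} (hx : x ≤ 2⁻¹) :
    Summable (fun n : ℕ => 1 / (((n : ℝ) + 1) - x) ^ j) := by
  have h2 : Summable (fun n : ℕ => (2:ℝ) ^ j * (1 / ((n : ℝ) + 1) ^ j)) :=
    (okada_summable_aux hj).mul_left _
  refine Summable.of_nonneg_of_le (fun n => ?_) (fun n => ?_) h2
  · have : (0:ℝ) < ((n : ℝ) + 1) - x := by
      have : (0:ℝ) ≤ (n:ℝ) := n.cast_nonneg
      linarith [show (2:ℝ)⁻¹ < 1 by norm_num]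
    positivity
  · have hpos : (0:ℝ) < ((n : ℝ) + 1) - x := by
      have : (0:ℝ) ≤ (n:ℝ) := n.cast_nonneg
      linarith [show (2:ℝ)⁻¹ < 1 by norm_num]
    have key : ((n:ℝ) + 1) ≤ 2 * (((n : ℝ) + 1) - x) := by
      have : (0:ℝ) ≤ (n:ℝ) := n.cast_nonneg
      linarith
    calc 1 / (((n : ℝ) + 1) - x) ^ j ≤ 1 / ((((n:ℝ)+1)) / 2) ^ j := by
          have hb : (0:ℝ) < ((n:ℝ)+1)/2 := by positivity
          refine one_div_le_one_div_of_le (pow_pos hb j) (pow_le_pow_left₀ hb.le (by linarith) j)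
      _ = (2:ℝ) ^ j * (1 / ((n : ℝ) + 1) ^ j) := by
          rw [div_pow]
          field_simp

lemma okada_one_div_pow_le {j : ℕ} (hj : 2 ≤ j) {c : ℝ} (hc : 1 ≤ c) (n : ℕ) (h : (n:ℝ)+1 ≤ c) :
    1 / c ^ j ≤ 1 / ((n:ℝ)+1) ^ 2 := by
  have hb : (0:ℝ) < (n:ℝ)+1 := by positivity
  calc 1 / c ^ j ≤ 1 / c ^ 2 := by
        refine one_div_le_one_div_of_le (by positivity) (pow_le_pow_right₀ hc hj)
    _ ≤ 1 / ((n:ℝ)+1) ^ 2 :=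
        one_div_le_one_div_of_le (by positivity) (pow_le_pow_left₀ hb.le h 2)

lemma okada_hasDerivAt_A {j : ℕ} (hj : 2 ≤ j) {x : ℝ} (hx : x ∈ Set.Ioo (0:ℝ) 2⁻¹) :
    HasDerivAt (okadaA j) (-(j:ℝ) * okadaA (j+1) x) x := by
  have key : HasDerivAt (fun y => ∑' n : ℕ, 1 / (y + ((n : ℝ) + 1)) ^ j)
      (∑' n : ℕ, -(j:ℝ) * (1 / (x + ((n : ℝ) + 1)) ^ (j+1))) x := by
    refine hasDerivAt_tsum_of_isPreconnected
      (u := fun n : ℕ => (j:ℝ) * (1 / ((n:ℝ)+1)^2))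
      (g := fun (n : ℕ) (y : ℝ) => 1 / (y + ((n : ℝ) + 1)) ^ j)
      (g' := fun (n : ℕ) (y : ℝ) => -(j:ℝ) * (1 / (y + ((n : ℝ) + 1)) ^ (j+1)))
      ((okada_summable_aux (le_refl 2)).mul_left (j:ℝ)) isOpen_Ioo
      (isPreconnected_Ioo)
      (fun n y hy => ?_) (fun n y hy => ?_) (show (4⁻¹:ℝ) ∈ Set.Ioo (0:ℝ) 2⁻¹ by norm_num)
      (okada_summable_A hj (by norm_num)) hx
    · have hg : HasDerivAt (fun y : ℝ => y + ((n:ℝ)+1)) 1 y := (hasDerivAt_id y).add_const _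
      have h0 : y + ((n:ℝ)+1) ≠ 0 := by
        have : (0:ℝ) ≤ (n:ℝ) := n.cast_nonneg
        have := hy.1; positivity
      have := okada_hasDerivAt_one_div_pow hg h0 (by omega : 1 ≤ j)
      refine this.congr_deriv ?_
      ring
    · have hy1 : (0:ℝ) < y := hy.1
      have hb : (0:ℝ) ≤ (n:ℝ) := n.cast_nonneg
      have h1 : (n:ℝ)+1 ≤ y + ((n:ℝ)+1) := by linarith
      have h2 : (1:ℝ) ≤ y + ((n:ℝ)+1) := by linarith
      have hpos : (0:ℝ) < y + ((n:ℝ)+1) := by linarith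
      have hle := okada_one_div_pow_le (by omega : 2 ≤ j+1) h2 n h1
      calc ‖-(j:ℝ) * (1 / (y + ((n : ℝ) + 1)) ^ (j+1))‖
          = (j:ℝ) * (1 / (y + ((n : ℝ) + 1)) ^ (j+1)) := by
            rw [norm_mul, norm_neg]
            simp [abs_of_nonneg, le_of_lt hpos]
        _ ≤ (j:ℝ) * (1 / ((n:ℝ)+1) ^ 2) := by
            have : (0:ℝ) ≤ (j:ℝ) := j.cast_nonneg
            exact mul_le_mul_of_nonneg_left hle this
  have e1 : (∑' n : ℕ, -(j:ℝ) * (1 / (x + ((n : ℝ) + 1)) ^ (j+1)))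
      = -(j:ℝ) * okadaA (j+1) x := tsum_mul_left
  rw [e1] at key
  exact key

lemma okada_hasDerivAt_B {j : ℕ} (hj : 2 ≤ j) {x : ℝ} (hx : x ∈ Set.Ioo (0:ℝ) 2⁻¹) :
    HasDerivAt (okadaB j) ((j:ℝ) * okadaB (j+1) x) x := by
  have key : HasDerivAt (fun y => ∑' n : ℕ, 1 / (((n : ℝ) + 1) - y) ^ j)
      (∑' n : ℕ, (j:ℝ) * (1 / (((n : ℝ) + 1) - x) ^ (j+1))) x := by
    refine hasDerivAt_tsum_of_isPreconnected
      (u := fun n : ℕ => (j:ℝ) * ((2:ℝ)^(j+1) * (1 / ((n:ℝ)+1)^2)))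
      (g := fun (n : ℕ) (y : ℝ) => 1 / (((n : ℝ) + 1) - y) ^ j)
      (g' := fun (n : ℕ) (y : ℝ) => (j:ℝ) * (1 / (((n : ℝ) + 1) - y) ^ (j+1)))
      (((okada_summable_aux (le_refl 2)).mul_left ((2:ℝ)^(j+1))).mul_left (j:ℝ)) isOpen_Ioo
      (isPreconnected_Ioo)
      (fun n y hy => ?_) (fun n y hy => ?_) (show (4⁻¹:ℝ) ∈ Set.Ioo (0:ℝ) 2⁻¹ by norm_num)
      (okada_summable_B hj (by norm_num)) hx
    · have hg : HasDerivAt (fun y : ℝ => ((n:ℝ)+1) - y) (-1) y := (hasDerivAt_id y).const_sub _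
      have h0 : ((n:ℝ)+1) - y ≠ 0 := by
        have : (0:ℝ) ≤ (n:ℝ) := n.cast_nonneg
        have h2 := hy.2
        have : (0:ℝ) < ((n:ℝ)+1) - y := by
          have : y < 1 := lt_trans h2 (by norm_num)
          linarith
        positivity
      have := okada_hasDerivAt_one_div_pow hg h0 (by omega : 1 ≤ j)
      refine this.congr_deriv ?_
      ring
    · have hy2 : y < 2⁻¹ := hy.2
      have hb : (0:ℝ) ≤ (n:ℝ) := n.cast_nonneg
      have hpos : (0:ℝ) < ((n:ℝ)+1) - y := by
        have : y < 1 := lt_trans hy2 (by norm_num)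
        linarith
      have key2 : ((n:ℝ)+1)/2 ≤ ((n:ℝ)+1) - y := by
        have h0 : (0:ℝ) < y := hy.1
        nlinarith
      have hb2 : (0:ℝ) < ((n:ℝ)+1)/2 := by positivity
      have hle : 1 / (((n:ℝ)+1) - y) ^ (j+1) ≤ (2:ℝ)^(j+1) * (1 / ((n:ℝ)+1) ^ 2) := by
        calc 1 / (((n:ℝ)+1) - y) ^ (j+1) ≤ 1 / (((n:ℝ)+1)/2) ^ (j+1) :=
              one_div_le_one_div_of_le (pow_pos hb2 _) (pow_le_pow_left₀ hb2.le key2 _)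
          _ = (2:ℝ)^(j+1) * (1 / ((n:ℝ)+1) ^ (j+1)) := by
              rw [div_pow]; field_simp
          _ ≤ (2:ℝ)^(j+1) * (1 / ((n:ℝ)+1) ^ 2) := by
              have h1 : (1:ℝ) ≤ (n:ℝ)+1 := by linarith
              have := okada_one_div_pow_le (by omega : 2 ≤ j+1) h1 n (le_refl _)
              have h2 : (0:ℝ) ≤ (2:ℝ)^(j+1) := by positivity
              exact mul_le_mul_of_nonneg_left this h2
      calc ‖(j:ℝ) * (1 / (((n : ℝ) + 1) - y) ^ (j+1))‖
          = (j:ℝ) * (1 / (((n : ℝ) + 1) - y) ^ (j+1)) := by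
            rw [norm_mul]
            simp [abs_of_nonneg, le_of_lt hpos]
        _ ≤ (j:ℝ) * ((2:ℝ)^(j+1) * (1 / ((n:ℝ)+1) ^ 2)) :=
            mul_le_mul_of_nonneg_left hle j.cast_nonneg
  have e1 : (∑' n : ℕ, (j:ℝ) * (1 / (((n : ℝ) + 1) - x) ^ (j+1)))
      = (j:ℝ) * okadaB (j+1) x := tsum_mul_left
  rw [e1] at key
  exact key


-- log bound
lemma okada_log_bound {t : ℝ} (h0 : 0 ≤ t) (h1 : t ≤ 2⁻¹) : |Real.log (1 - t)| ≤ 2 * t := by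
  have hpos : (0:ℝ) < 1 - t := by linarith
  have h2 : Real.log (1 - t) ≤ 0 := Real.log_nonpos (by linarith) (by linarith)
  rw [abs_of_nonpos h2]
  have h3 : -Real.log (1 - t) = Real.log (1 - t)⁻¹ := (Real.log_inv _).symm
  rw [h3]
  have h4 : Real.log (1 - t)⁻¹ ≤ (1 - t)⁻¹ - 1 := Real.log_le_sub_one_of_pos (by positivity)
  have h5 : (1 - t)⁻¹ - 1 ≤ 2 * t := by
    rw [inv_eq_one_div, div_sub' (ne_of_gt hpos)]
    rw [div_le_iff₀ hpos]
    nlinarith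
  linarith

lemma okada_factor_pos {x : ℝ} (hx : |x| ≤ 2⁻¹) (n : ℕ) :
    (2:ℝ)⁻¹ ≤ 1 - x^2/((n:ℝ)+1)^2 := by
  have h1 : x^2 ≤ 4⁻¹ := by nlinarith [abs_nonneg x, sq_abs x]
  have h2 : (1:ℝ) ≤ ((n:ℝ)+1)^2 := by nlinarith [(show (0:ℝ) ≤ (n:ℝ) from Nat.cast_nonneg n)]
  have h3 : x^2/((n:ℝ)+1)^2 ≤ 4⁻¹ := by
    calc x^2/((n:ℝ)+1)^2 ≤ x^2/1 := by
          apply div_le_div_of_nonneg_left (by positivity) (by norm_num) h2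
      _ ≤ 4⁻¹ := by simpa using h1
  linarith

lemma okada_summable_log {x : ℝ} (hx : |x| ≤ 2⁻¹) :
    Summable (fun n : ℕ => Real.log (1 - x^2/((n:ℝ)+1)^2)) := by
  apply Summable.of_norm
  refine Summable.of_nonneg_of_le (fun n => norm_nonneg _) (fun n => ?_)
    ((okada_summable_aux (le_refl 2)).mul_left (2 * x^2))
  have h2 : (1:ℝ) ≤ ((n:ℝ)+1)^2 := by nlinarith [(show (0:ℝ) ≤ (n:ℝ) from Nat.cast_nonneg n)]
  have ht0 : 0 ≤ x^2/((n:ℝ)+1)^2 := by positivity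
  have ht1 : x^2/((n:ℝ)+1)^2 ≤ 2⁻¹ := by
    have := okada_factor_pos hx n; linarith
  have := okada_log_bound ht0 ht1
  calc ‖Real.log (1 - x^2/((n:ℝ)+1)^2)‖ ≤ 2 * (x^2/((n:ℝ)+1)^2) := this
    _ = 2 * x^2 * (1/((n:ℝ)+1)^2) := by ring

noncomputable def okadaL (x : ℝ) : ℝ :=
  Real.log (π * x) + ∑' n : ℕ, Real.log (1 - x^2/((n:ℝ)+1)^2)

lemma okada_exp_L {x : ℝ} (hx : x ∈ Set.Ioo (0:ℝ) 2⁻¹) :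
    Real.exp (okadaL x) = Real.sin (π * x) := by
  have hxa : |x| ≤ 2⁻¹ := by rw [abs_of_pos hx.1]; exact le_of_lt hx.2
  have hsum := okada_summable_log hxa
  have h1 : Filter.Tendsto (fun N => ∑ n ∈ Finset.range N, Real.log (1 - x^2/((n:ℝ)+1)^2))
      Filter.atTop (nhds (∑' n : ℕ, Real.log (1 - x^2/((n:ℝ)+1)^2))) :=
    hsum.hasSum.tendsto_sum_nat
  have h2 : Filter.Tendsto (fun N => Real.exp (Real.log (π * x) +
      ∑ n ∈ Finset.range N, Real.log (1 - x^2/((n:ℝ)+1)^2)))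
      Filter.atTop (nhds (Real.exp (okadaL x))) :=
    (Real.continuous_exp.tendsto _).comp (h1.const_add _)
  have h3 : ∀ N, Real.exp (Real.log (π * x) +
      ∑ n ∈ Finset.range N, Real.log (1 - x^2/((n:ℝ)+1)^2))
      = π * x * ∏ n ∈ Finset.range N, (1 - x^2/((n:ℝ)+1)^2) := by
    intro N
    rw [Real.exp_add, Real.exp_sum, Real.exp_log (mul_pos Real.pi_pos hx.1)]
    congr 1
    refine Finset.prod_congr rfl (fun n _ => ?_)
    exact Real.exp_log (lt_of_lt_of_le (by norm_num : (0:ℝ) < 2⁻¹) (okada_factor_pos hxa n))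
  have h4 := Real.tendsto_euler_sin_prod x
  have h5 : Filter.Tendsto (fun N => Real.exp (Real.log (π * x) +
      ∑ n ∈ Finset.range N, Real.log (1 - x^2/((n:ℝ)+1)^2)))
      Filter.atTop (nhds (Real.sin (π * x))) := by
    simpa only [h3] using h4
  exact tendsto_nhds_unique h2 h5

lemma okada_hasDerivAt_L {x : ℝ} (hx : x ∈ Set.Ioo (0:ℝ) 2⁻¹) :
    HasDerivAt okadaL
      (1/x + ∑' n : ℕ, (1/(x+((n:ℝ)+1)) + 1/(x-((n:ℝ)+1)))) x := by
  have hlog : HasDerivAt (fun y : ℝ => Real.log (π * y)) (1/x) x := by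
    have h1 : HasDerivAt (fun y : ℝ => π * y) π x := by
      simpa using (hasDerivAt_id x).const_mul π
    have h2 := h1.log (ne_of_gt (mul_pos Real.pi_pos hx.1))
    convert h2 using 1
    rw [eq_div_iff (ne_of_gt (mul_pos Real.pi_pos hx.1))]
    field_simp [ne_of_gt hx.1]
  have hts : HasDerivAt (fun y => ∑' n : ℕ, Real.log (1 - y^2/((n:ℝ)+1)^2))
      (∑' n : ℕ, (1/(x+((n:ℝ)+1)) + 1/(x-((n:ℝ)+1)))) x := by
    refine hasDerivAt_tsum_of_isPreconnected
      (u := fun n : ℕ => 2 * (1 / ((n:ℝ)+1)^2))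
      (g := fun (n : ℕ) (y : ℝ) => Real.log (1 - y^2/((n:ℝ)+1)^2))
      (g' := fun (n : ℕ) (y : ℝ) => 1/(y+((n:ℝ)+1)) + 1/(y-((n:ℝ)+1)))
      ((okada_summable_aux (le_refl 2)).mul_left 2) isOpen_Ioo isPreconnected_Ioo
      (fun n y hy => ?_) (fun n y hy => ?_)
      (show (4⁻¹:ℝ) ∈ Set.Ioo (0:ℝ) 2⁻¹ by norm_num)
      (okada_summable_log (by rw [abs_of_pos (by norm_num)]; norm_num)) hx
    · have hya : |y| ≤ 2⁻¹ := by
        rw [abs_of_pos hy.1]; exact le_of_lt hy.2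
      have hc : (0:ℝ) < (n:ℝ)+1 := by positivity
      have h1 : HasDerivAt (fun z : ℝ => 1 - z^2/((n:ℝ)+1)^2) (-(2*y)/((n:ℝ)+1)^2) y := by
        have := ((hasDerivAt_pow 2 y).div_const (((n:ℝ)+1)^2)).const_sub 1
        refine this.congr_deriv ?_
        push_cast
        ring
      have hne : 1 - y^2/((n:ℝ)+1)^2 ≠ 0 :=
        ne_of_gt (lt_of_lt_of_le (by norm_num : (0:ℝ) < 2⁻¹) (okada_factor_pos hya n))
      have h2 := h1.log hne
      refine h2.congr_deriv ?_
      have hy1 : y + ((n:ℝ)+1) ≠ 0 :=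
        ne_of_gt (by nlinarith [(show (0:ℝ) ≤ (n:ℝ) from Nat.cast_nonneg n), hy.1] : (0:ℝ) < y + ((n:ℝ)+1))
      have hy2 : y - ((n:ℝ)+1) ≠ 0 := by
        have h3 : y < 1 := lt_trans hy.2 (by norm_num)
        have : y - ((n:ℝ)+1) < 0 := by nlinarith [(show (0:ℝ) ≤ (n:ℝ) from Nat.cast_nonneg n)]
        exact ne_of_lt this
      have hc2 : (((n:ℝ)+1)^2 : ℝ) ≠ 0 := by positivity
      have hdenpos : (0:ℝ) < ((n:ℝ)+1)^2 - y^2 := by nlinarith [(show (0:ℝ) ≤ (n:ℝ) from Nat.cast_nonneg n), hy.1, hy.2]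
      have hden : (((n:ℝ)+1)^2 - y^2 : ℝ) ≠ 0 := ne_of_gt hdenpos
      have e : 1 - y^2/((n:ℝ)+1)^2 = (((n:ℝ)+1)^2 - y^2)/((n:ℝ)+1)^2 := by
        field_simp
      rw [e, div_div_div_cancel_right₀]
      · field_simp
        ring
      · exact hc2
    · have hya : |y| ≤ 2⁻¹ := by rw [abs_of_pos hy.1]; exact le_of_lt hy.2
      have hc1 : (1:ℝ) ≤ (n:ℝ)+1 := by nlinarith [(show (0:ℝ) ≤ (n:ℝ) from Nat.cast_nonneg n)]
      have hy0 : (0:ℝ) < y := hy.1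
      have hy2 : y < 2⁻¹ := hy.2
      -- g' = 2y/(y²-c²) with c = n+1; |g'| = 2y/(c²-y²) ≤ 1/(c²-4⁻¹) ≤ 2/c²... show ≤ 2/c²
      show ‖1/(y+((n:ℝ)+1)) + 1/(y-((n:ℝ)+1))‖ ≤ 2 * (1/((n:ℝ)+1)^2)
      have hval : 1/(y+((n:ℝ)+1)) + 1/(y-((n:ℝ)+1)) = -(2*y)/(((n:ℝ)+1)^2 - y^2) := by
        have hy1 : y + ((n:ℝ)+1) ≠ 0 :=
          ne_of_gt (by nlinarith [(show (0:ℝ) ≤ (n:ℝ) from Nat.cast_nonneg n)] : (0:ℝ) < y + ((n:ℝ)+1))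
        have hylt : y - ((n:ℝ)+1) < 0 := by nlinarith
        have hy2' : y - ((n:ℝ)+1) ≠ 0 := ne_of_lt hylt
        have hden : ((n:ℝ)+1)^2 - y^2 ≠ 0 := by nlinarith
        field_simp
        ring
      rw [hval]
      have hden : (0:ℝ) < ((n:ℝ)+1)^2 - y^2 := by nlinarith
      rw [norm_div, norm_neg]
      have e1 : ‖2*y‖ = 2*y := by rw [norm_of_nonneg (by linarith)]
      have e2 : ‖((n:ℝ)+1)^2 - y^2‖ = ((n:ℝ)+1)^2 - y^2 := by
        rw [norm_of_nonneg (le_of_lt hden)]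
      rw [e1, e2]
      rw [div_le_iff₀ hden]
      have h34 : (3:ℝ)/4 * ((n:ℝ)+1)^2 ≤ ((n:ℝ)+1)^2 - y^2 := by nlinarith
      have hcpos : (0:ℝ) < ((n:ℝ)+1)^2 := by positivity
      calc (2:ℝ)*y ≤ 1 := by linarith
        _ ≤ 2 * (1/((n:ℝ)+1)^2) * ((3:ℝ)/4 * ((n:ℝ)+1)^2) := by
            have hne : (((n:ℝ)+1)^2 : ℝ) ≠ 0 := by positivity
            have e3 : 2 * (1/((n:ℝ)+1)^2) * ((3:ℝ)/4 * ((n:ℝ)+1)^2) = 3/2 := by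
              field_simp
              ring
            rw [e3]; norm_num
        _ ≤ 2 * (1/((n:ℝ)+1)^2) * (((n:ℝ)+1)^2 - y^2) := by
            have : (0:ℝ) ≤ 2 * (1/((n:ℝ)+1)^2) := by positivity
            exact mul_le_mul_of_nonneg_left h34 this
  exact hlog.add hts

lemma okada_cot_eq {x : ℝ} (hx : x ∈ Set.Ioo (0:ℝ) 2⁻¹) :
    π * (Real.cos (π * x) / Real.sin (π * x))
      = 1/x + ∑' n : ℕ, (1/(x+((n:ℝ)+1)) + 1/(x-((n:ℝ)+1))) := by
  set R := 1/x + ∑' n : ℕ, (1/(x+((n:ℝ)+1)) + 1/(x-((n:ℝ)+1))) with hR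
  have hsin_pos : 0 < Real.sin (π * x) := by
    apply Real.sin_pos_of_pos_of_lt_pi
    · exact mul_pos Real.pi_pos hx.1
    · have h2 : x < 1 := lt_trans hx.2 (by norm_num)
      nlinarith [Real.pi_pos]
  have hE : HasDerivAt (fun y => Real.exp (okadaL y)) (Real.exp (okadaL x) * R) x :=
    (okada_hasDerivAt_L hx).exp
  have hS : HasDerivAt (fun y => Real.sin (π * y)) (π * Real.cos (π * x)) x := by
    have h1 : HasDerivAt (fun y : ℝ => π * y) π x := by
      simpa using (hasDerivAt_id x).const_mul π
    have := h1.sin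
    convert this using 1
    ring
  have heq : (fun y => Real.exp (okadaL y)) =ᶠ[nhds x] (fun y => Real.sin (π * y)) := by
    filter_upwards [isOpen_Ioo.mem_nhds hx] with y hy
    exact okada_exp_L hy
  have hE' : HasDerivAt (fun y => Real.sin (π * y)) (Real.exp (okadaL x) * R) x :=
    hE.congr_of_eventuallyEq heq.symm
  have huniq : Real.exp (okadaL x) * R = π * Real.cos (π * x) := hE'.unique hS
  rw [okada_exp_L hx] at huniq
  have hfin : R = π * Real.cos (π * x) / Real.sin (π * x) := by
    rw [eq_div_iff (ne_of_gt hsin_pos)]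
    linear_combination huniq
  rw [hfin, mul_div_assoc]

-- claim 2 : iterated derivatives
lemma okada_pair_bound {n : ℕ} {y : ℝ} (hy : y ∈ Set.Ioo (0:ℝ) 2⁻¹) :
    ‖-(1 / (y + ((n:ℝ)+1)) ^ 2 + 1 / (((n:ℝ)+1) - y) ^ 2)‖ ≤ 5 * (1 / ((n:ℝ)+1)^2) := by
  have hn : (0:ℝ) ≤ (n:ℝ) := Nat.cast_nonneg n
  have h1 : (0:ℝ) < y + ((n:ℝ)+1) := by nlinarith [hy.1]
  have h2 : (0:ℝ) < ((n:ℝ)+1) - y := by nlinarith [hy.2]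
  have hb1 : 1 / (y + ((n:ℝ)+1)) ^ 2 ≤ 1 / ((n:ℝ)+1)^2 := by
    refine one_div_le_one_div_of_le (by positivity) (pow_le_pow_left₀ (by positivity) (by nlinarith [hy.1]) 2)
  have hb2 : 1 / (((n:ℝ)+1) - y) ^ 2 ≤ 4 * (1 / ((n:ℝ)+1)^2) := by
    have hkey : ((n:ℝ)+1)/2 ≤ ((n:ℝ)+1) - y := by nlinarith [hy.2]
    have hb : (0:ℝ) < ((n:ℝ)+1)/2 := by positivity
    calc 1 / (((n:ℝ)+1) - y) ^ 2 ≤ 1 / (((n:ℝ)+1)/2) ^ 2 :=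
          one_div_le_one_div_of_le (pow_pos hb 2) (pow_le_pow_left₀ hb.le hkey 2)
      _ = 4 * (1 / ((n:ℝ)+1)^2) := by
          rw [div_pow]; field_simp; ring
  rw [norm_neg, norm_of_nonneg (by positivity)]
  linarith

lemma okada_deriv_base {x : ℝ} (hx : x ∈ Set.Ioo (0:ℝ) 2⁻¹) :
    HasDerivAt (fun y : ℝ => 1/y + ∑' n : ℕ, (1/(y+((n:ℝ)+1)) + 1/(y-((n:ℝ)+1))))
      (-(1/x^2) - (okadaA 2 x + okadaB 2 x)) x := by
  have hx0 : x ≠ 0 := ne_of_gt hx.1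
  have h1 : HasDerivAt (fun y : ℝ => 1/y) (-(1/x^2)) x := by
    have h := okada_hasDerivAt_one_div_pow (hasDerivAt_id x) hx0 (le_refl 1)
    simp only [id_eq, pow_one, Nat.cast_one] at h
    convert h using 1
    ring
  have h2 : HasDerivAt (fun y => ∑' n : ℕ, (1/(y+((n:ℝ)+1)) + 1/(y-((n:ℝ)+1))))
      (∑' n : ℕ, -(1 / (x + ((n:ℝ)+1)) ^ 2 + 1 / (((n:ℝ)+1) - x) ^ 2)) x := by
    refine hasDerivAt_tsum_of_isPreconnected
      (u := fun n : ℕ => 5 * (1 / ((n:ℝ)+1)^2))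
      (g := fun (n : ℕ) (y : ℝ) => 1/(y+((n:ℝ)+1)) + 1/(y-((n:ℝ)+1)))
      (g' := fun (n : ℕ) (y : ℝ) => -(1 / (y + ((n:ℝ)+1)) ^ 2 + 1 / (((n:ℝ)+1) - y) ^ 2))
      ((okada_summable_aux (le_refl 2)).mul_left 5) isOpen_Ioo isPreconnected_Ioo
      (fun n y hy => ?_) (fun n y hy => okada_pair_bound hy)
      (show (4⁻¹:ℝ) ∈ Set.Ioo (0:ℝ) 2⁻¹ by norm_num) ?_ hx
    · have hn : (0:ℝ) ≤ (n:ℝ) := Nat.cast_nonneg n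
      have hy1 : y + ((n:ℝ)+1) ≠ 0 := ne_of_gt (by nlinarith [hy.1])
      have hy2 : y - ((n:ℝ)+1) ≠ 0 := by
        have : y - ((n:ℝ)+1) < 0 := by nlinarith [hy.2]
        exact ne_of_lt this
      have t1 := okada_hasDerivAt_one_div_pow ((hasDerivAt_id y).add_const (((n:ℝ)+1)))
        hy1 (le_refl 1)
      have t2 := okada_hasDerivAt_one_div_pow ((hasDerivAt_id y).sub_const (((n:ℝ)+1)))
        hy2 (le_refl 1)
      have ht := t1.add t2
      simp only [id_eq, pow_one, Nat.cast_one] at ht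
      refine ht.congr_deriv ?_
      ring
    · refine Summable.of_norm ?_
      refine Summable.of_nonneg_of_le (fun n => norm_nonneg _) (fun n => ?_)
        ((okada_summable_aux (le_refl 2)).mul_left 2)
      have hn : (0:ℝ) ≤ (n:ℝ) := Nat.cast_nonneg n
      have hy1 : (0:ℝ) < 4⁻¹ + ((n:ℝ)+1) := by nlinarith
      have hy2 : (0:ℝ) < ((n:ℝ)+1) - 4⁻¹ := by nlinarith
      have hval : 1/((4⁻¹:ℝ)+((n:ℝ)+1)) + 1/((4⁻¹:ℝ)-((n:ℝ)+1))
          = -(2*(4⁻¹:ℝ))/(((n:ℝ)+1)^2 - (4⁻¹:ℝ)^2) := by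
        have e1 : ((4⁻¹:ℝ)+((n:ℝ)+1)) ≠ 0 := ne_of_gt hy1
        have e2 : ((4⁻¹:ℝ)-((n:ℝ)+1)) ≠ 0 := by
          have : (4⁻¹:ℝ)-((n:ℝ)+1) < 0 := by nlinarith
          exact ne_of_lt this
        have e3 : (((n:ℝ)+1)^2 - (4⁻¹:ℝ)^2) ≠ 0 := by nlinarith
        rw [div_add_div _ _ e1 e2, div_eq_div_iff (mul_ne_zero e1 e2) e3]
        ring
      show ‖1/((4⁻¹:ℝ)+((n:ℝ)+1)) + 1/((4⁻¹:ℝ)-((n:ℝ)+1))‖ ≤ 2 * (1/((n:ℝ)+1)^2)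
      rw [hval, norm_div, norm_neg]
      have hd : (0:ℝ) < ((n:ℝ)+1)^2 - (4⁻¹:ℝ)^2 := by nlinarith
      rw [norm_of_nonneg (by norm_num : (0:ℝ) ≤ 2*(4⁻¹:ℝ)), norm_of_nonneg hd.le]
      rw [div_le_iff₀ hd]
      have h34 : (3:ℝ)/4 * ((n:ℝ)+1)^2 ≤ ((n:ℝ)+1)^2 - (4⁻¹:ℝ)^2 := by nlinarith
      have e3 : 2 * (1/((n:ℝ)+1)^2) * ((3:ℝ)/4 * ((n:ℝ)+1)^2) = 3/2 := by
        have : (((n:ℝ)+1)^2 : ℝ) ≠ 0 := by positivity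
        field_simp
        ring
      calc 2*(4⁻¹:ℝ) = 1/2 := by norm_num
        _ ≤ 2 * (1/((n:ℝ)+1)^2) * ((3:ℝ)/4 * ((n:ℝ)+1)^2) := by rw [e3]; norm_num
        _ ≤ 2 * (1/((n:ℝ)+1)^2) * (((n:ℝ)+1)^2 - (4⁻¹:ℝ)^2) := by
            have : (0:ℝ) ≤ 2 * (1/((n:ℝ)+1)^2) := by positivity
            exact mul_le_mul_of_nonneg_left h34 this
  have hsum : (∑' n : ℕ, -(1 / (x + ((n:ℝ)+1)) ^ 2 + 1 / (((n:ℝ)+1) - x) ^ 2))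
      = -(okadaA 2 x + okadaB 2 x) := by
    rw [tsum_neg]
    congr 1
    exact Summable.tsum_add (okada_summable_A (le_refl 2) hx.1)
      (okada_summable_B (le_refl 2) hx.2.le)
  have hfin := h1.add h2
  rw [hsum] at hfin
  exact hfin.congr_deriv (by ring)

lemma okada_iteratedDeriv {m : ℕ} (hm : 1 ≤ m) :
    ∀ x ∈ Set.Ioo (0:ℝ) 2⁻¹,
      iteratedDeriv m (fun z : ℝ => π * (Real.cos (π * z) / Real.sin (π * z))) x
        = (-1:ℝ)^m * m.factorial * (1/x^(m+1) + okadaA (m+1) x)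
            - m.factorial * okadaB (m+1) x := by
  induction m, hm using Nat.le_induction with
  | base =>
    intro x hx
    rw [iteratedDeriv_one]
    have hEq : (fun z : ℝ => π * (Real.cos (π * z) / Real.sin (π * z)))
        =ᶠ[nhds x] (fun y : ℝ => 1/y + ∑' n : ℕ, (1/(y+((n:ℝ)+1)) + 1/(y-((n:ℝ)+1)))) := by
      filter_upwards [isOpen_Ioo.mem_nhds hx] with y hy
      exact okada_cot_eq hy
    rw [hEq.deriv_eq, (okada_deriv_base hx).deriv]
    norm_num [Nat.factorial]
    ring
  | succ m hm ih =>
    intro x hx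
    rw [iteratedDeriv_succ]
    have hEq : iteratedDeriv m (fun z : ℝ => π * (Real.cos (π * z) / Real.sin (π * z)))
        =ᶠ[nhds x] (fun y : ℝ => (-1:ℝ)^m * m.factorial * (1/y^(m+1) + okadaA (m+1) y)
            - m.factorial * okadaB (m+1) y) := by
      filter_upwards [isOpen_Ioo.mem_nhds hx] with y hy
      exact ih y hy
    rw [hEq.deriv_eq]
    have hx0 : x ≠ 0 := ne_of_gt hx.1
    have h1 : HasDerivAt (fun y : ℝ => 1/y^(m+1)) (-((m:ℝ)+1) * 1 / x^(m+2)) x := by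
      have := okada_hasDerivAt_one_div_pow (hasDerivAt_id x) hx0
        (by omega : 1 ≤ m+1)
      exact this.congr_deriv (by simp only [id_eq]; push_cast; ring)
    have hA := okada_hasDerivAt_A (by omega : 2 ≤ m+1) hx
    have hB := okada_hasDerivAt_B (by omega : 2 ≤ m+1) hx
    have hd : HasDerivAt (fun y : ℝ => (-1:ℝ)^m * m.factorial * (1/y^(m+1) + okadaA (m+1) y)
            - m.factorial * okadaB (m+1) y)
        ((-1:ℝ)^m * m.factorial * ((-((m:ℝ)+1) * 1 / x^(m+2)) + (-((m:ℝ)+1) * okadaA (m+2) x))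
            - m.factorial * (((m:ℝ)+1) * okadaB (m+2) x)) x := by
      have e1 := ((h1.add hA).const_mul ((-1:ℝ)^m * m.factorial)).sub (hB.const_mul (m.factorial:ℝ))
      refine e1.congr_deriv ?_
      push_cast
      ring
    rw [hd.deriv]
    rw [Nat.factorial_succ]
    push_cast
    ring


-- Final pieces
lemma okada_hurwitz_split {k : ℕ} (hk : 2 ≤ k) {x : ℝ} (hx : x ∈ Set.Ioo (0:ℝ) 2⁻¹) :
    hurwitz k x = 1/x^k + okadaA k x := by
  have hs : Summable (fun n : ℕ => 1 / ((n:ℝ) + x) ^ k) := by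
    refine (summable_nat_add_iff 1).mp ?_
    refine ((okada_summable_A hk hx.1).congr (fun n => ?_))
    push_cast
    ring_nf
  rw [hurwitz, Summable.tsum_eq_zero_add hs]
  congr 1
  · norm_num
  · refine tsum_congr (fun n => ?_)
    push_cast
    ring_nf

lemma okada_hurwitz_split' {k : ℕ} (hk : 2 ≤ k) {x : ℝ} (hx : x ∈ Set.Ioo (0:ℝ) 2⁻¹) :
    hurwitz k (1 - x) = okadaB k x := by
  rw [hurwitz, okadaB]
  refine tsum_congr (fun n => ?_)
  ring_nf

-- the key identity at x = a/q
lemma okada_key {k : ℕ} (hk : 2 ≤ k) {x : ℝ} (hx : x ∈ Set.Ioo (0:ℝ) 2⁻¹) :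
    iteratedDeriv (k-1) (fun z : ℝ => π * (Real.cos (π * z) / Real.sin (π * z))) x
      = (-1:ℝ)^(k-1) * (k-1).factorial * hurwitz k x
          - (k-1).factorial * hurwitz k (1 - x) := by
  have h1 : 1 ≤ k - 1 := by omega
  have h2 : (k - 1) + 1 = k := by omega
  rw [okada_iteratedDeriv h1 x hx, h2, okada_hurwitz_split hk hx, okada_hurwitz_split' hk hx]

-- counting
lemma okada_count {q : ℕ} (hq : 3 ≤ q) :
    q.totient ≤ 2 * ((Finset.range q).filter
      (fun a => 1 ≤ a ∧ 2 * a < q ∧ a.Coprime q)).card := by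
  classical
  set S₁ := (Finset.range q).filter (fun a => 1 ≤ a ∧ 2 * a < q ∧ a.Coprime q) with hS₁
  have hsub : (Finset.range q).filter q.Coprime ⊆ S₁ ∪ S₁.image (fun a => q - a) := by
    intro a ha
    rw [Finset.mem_filter, Finset.mem_range] at ha
    obtain ⟨haq, hcop⟩ := ha
    have ha0 : 1 ≤ a := by
      rcases Nat.eq_zero_or_pos a with h | h
      · subst h
        rw [Nat.coprime_zero_right] at hcop
        omega
      · exact h
    have hacop : a.Coprime q := hcop.symm
    rcases lt_trichotomy (2 * a) q with h | h | h
    · apply Finset.mem_union_left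
      rw [hS₁, Finset.mem_filter, Finset.mem_range]
      exact ⟨haq, ha0, h, hacop⟩
    · exfalso
      have hdvd : a ∣ q := ⟨2, by omega⟩
      have hg : Nat.gcd a q = a := Nat.gcd_eq_left hdvd
      unfold Nat.Coprime at hacop
      rw [hg] at hacop
      omega
    · apply Finset.mem_union_right
      rw [Finset.mem_image]
      refine ⟨q - a, ?_, by omega⟩
      rw [hS₁, Finset.mem_filter, Finset.mem_range]
      refine ⟨by omega, by omega, by omega, ?_⟩
      exact (Nat.coprime_self_sub_left (le_of_lt haq)).mpr hacop
  calc q.totient = ((Finset.range q).filter q.Coprime).card := by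
        rw [Nat.totient]
    _ ≤ (S₁ ∪ S₁.image (fun a => q - a)).card := Finset.card_le_card hsub
    _ ≤ S₁.card + (S₁.image (fun a => q - a)).card := Finset.card_union_le _ _
    _ ≤ S₁.card + S₁.card := by
        have := Finset.card_image_le (s := S₁) (f := fun a => q - a)
        omega
    _ = 2 * S₁.card := by ring

theorem finrank_span_hurwitz_div_pi_pow_ge (k q : ℕ) (hk : 2 ≤ k) (hq : 3 ≤ q)
    (hOkada : LinearIndependent ℚ
      (fun a : {a : ℕ // 1 ≤ a ∧ 2 * a < q ∧ Nat.Coprime a q} =>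
        iteratedDeriv (k - 1)
          (fun z : ℝ => π * (Real.cos (π * z) / Real.sin (π * z))) ((a : ℝ) / q))) :
    q.totient / 2 ≤
      Module.finrank ℚ
        ↥(Submodule.span ℚ
          {x : ℝ | ∃ a : ℕ, 1 ≤ a ∧ a < q ∧ Nat.Coprime a q ∧
            x = hurwitz k (a / q) / π ^ k}) := by
  classical
  set S : Set ℝ := {x : ℝ | ∃ a : ℕ, 1 ≤ a ∧ a < q ∧ Nat.Coprime a q ∧
      x = hurwitz k (a / q) / π ^ k} with hSdef
  set W : Submodule ℚ ℝ := Submodule.span ℚ S with hWdef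
  have hπ : (π : ℝ) ^ k ≠ 0 := pow_ne_zero _ Real.pi_ne_zero
  set c : ℝ := (π ^ k)⁻¹ with hcdef
  have hc : c ≠ 0 := inv_ne_zero hπ
  have hq0 : (0:ℝ) < (q:ℝ) := by exact_mod_cast (by omega : 0 < q)
  -- scaled independent family
  let f : ℝ →ₗ[ℚ] ℝ := LinearMap.mulLeft ℚ c
  have hfinj : Function.Injective f := by
    intro u v huv
    simp only [f, LinearMap.mulLeft_apply] at huv
    exact mul_left_cancel₀ hc huv
  have hind := hOkada.map' f (LinearMap.ker_eq_bot.mpr hfinj)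
  -- membership of the scaled family in W
  have hmem : ∀ a : {a : ℕ // 1 ≤ a ∧ 2 * a < q ∧ Nat.Coprime a q},
      c * iteratedDeriv (k - 1)
        (fun z : ℝ => π * (Real.cos (π * z) / Real.sin (π * z))) ((a : ℝ) / q) ∈ W := by
    rintro ⟨a, ha1, ha2, ha3⟩
    have haq : a < q := by omega
    have hx : ((a:ℝ)/(q:ℝ)) ∈ Set.Ioo (0:ℝ) 2⁻¹ := by
      constructor
      · apply div_pos _ hq0
        exact_mod_cast (by omega : 0 < a)
      · rw [div_lt_iff₀ hq0]
        have h2 : (2:ℝ) * (a:ℝ) < (q:ℝ) := by exact_mod_cast ha2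
        linarith
    have hkey := okada_key hk hx
    have hsub : (1:ℝ) - (a:ℝ)/(q:ℝ) = ((q - a : ℕ):ℝ)/(q:ℝ) := by
      rw [Nat.cast_sub (le_of_lt haq)]
      field_simp
    rw [hsub] at hkey
    have hg1 : hurwitz k ((a:ℝ)/(q:ℝ)) / π ^ k ∈ S := ⟨a, ha1, haq, ha3, rfl⟩
    have hg2 : hurwitz k (((q - a : ℕ):ℝ)/(q:ℝ)) / π ^ k ∈ S :=
      ⟨q - a, by omega, by omega, (Nat.coprime_self_sub_left (le_of_lt haq)).mpr ha3, rfl⟩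
    have hrw : c * iteratedDeriv (k - 1)
        (fun z : ℝ => π * (Real.cos (π * z) / Real.sin (π * z))) ((a : ℝ) / q)
        = (((-1:ℚ)^(k-1) * ((k-1).factorial : ℚ))) • (hurwitz k ((a:ℝ)/(q:ℝ)) / π ^ k)
          + ((-(((k-1).factorial : ℚ)))) • (hurwitz k (((q - a : ℕ):ℝ)/(q:ℝ)) / π ^ k) := by
      rw [hkey, Rat.smul_def, Rat.smul_def]
      push_cast
      simp only [hcdef, div_eq_mul_inv]
      ring
    rw [hrw]
    exact W.add_mem (W.smul_mem _ (Submodule.subset_span hg1))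
      (W.smul_mem _ (Submodule.subset_span hg2))
  -- finite dimensionality
  have hSfin : S.Finite := by
    apply Set.Finite.subset ((Set.finite_Iio q).image (fun a : ℕ => hurwitz k ((a:ℝ)/(q:ℝ)) / π ^ k))
    rintro x ⟨a, h1, h2, h3, rfl⟩
    exact ⟨a, h2, rfl⟩
  haveI : FiniteDimensional ℚ W := FiniteDimensional.span_of_finite ℚ hSfin
  haveI hFin : Fintype {a : ℕ // 1 ≤ a ∧ 2 * a < q ∧ Nat.Coprime a q} :=
    Fintype.subtype ((Finset.range q).filter (fun a => 1 ≤ a ∧ 2 * a < q ∧ Nat.Coprime a q))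
      (by
        intro a
        simp only [Finset.mem_filter, Finset.mem_range]
        constructor
        · rintro ⟨h1, h2⟩; exact h2
        · intro h; exact ⟨by omega, h⟩)
  let w' : {a : ℕ // 1 ≤ a ∧ 2 * a < q ∧ Nat.Coprime a q} → W :=
    fun a => ⟨c * iteratedDeriv (k - 1)
      (fun z : ℝ => π * (Real.cos (π * z) / Real.sin (π * z))) ((a : ℝ) / q), hmem a⟩
  have hind' : LinearIndependent ℚ w' := by
    apply LinearIndependent.of_comp W.subtype
    exact hind
  have hcard := hind'.fintype_card_le_finrank
  have hcards : Fintype.card {a : ℕ // 1 ≤ a ∧ 2 * a < q ∧ Nat.Coprime a q}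
      = ((Finset.range q).filter (fun a => 1 ≤ a ∧ 2 * a < q ∧ Nat.Coprime a q)).card := by
    apply Fintype.card_of_subtype
    intro a
    simp only [Finset.mem_filter, Finset.mem_range]
    constructor
    · rintro ⟨h1, h2⟩; exact h2
    · intro h; exact ⟨by omega, h⟩
  have hcount := okada_count hq
  omega
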